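/- (Proposition 1, product form.) Fix 0 ≤ α < 1. For every τ > 0 and every δ > 0 there exists n₀ ∈ ℕ such that |P_{N,α}(t) − 1| < δ for all integers N > n₀ and all t ∈ ℝ with |t| ≤ τ. -/

import Mathlib

/-- Kac normalization `𝒩_α(N) = (2 ∑_{j=1}^{⌊N/2⌋} j^{−α})⁻¹`. -/
noncomputable def kacNorm (α : ℝ) (N : ℕ) : ℝ :=
  (2 * ∑ j ∈ Finset.Icc 1 (N / 2), (j : ℝ) ^ (-α))⁻¹

/-- The relaxation product `P_{N,α}(t) = ∏_{j=1}^{⌊N/2⌋} cos²(2 𝒩_α(N) t j^{−α})`. -/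
noncomputable def relaxProd (α : ℝ) (N : ℕ) (t : ℝ) : ℝ :=
  ∏ j ∈ Finset.Icc 1 (N / 2), Real.cos (2 * kacNorm α N * t * (j : ℝ) ^ (-α)) ^ 2

/-- Weierstrass product inequality: `1 - ∑ f ≤ ∏ (1 - f)` for `f` with values in `[0,1]`. -/
lemma weier_aux (s : Finset ℕ) (f : ℕ → ℝ) (h0 : ∀ i ∈ s, 0 ≤ f i) (h1 : ∀ i ∈ s, f i ≤ 1) :
    1 - ∑ i ∈ s, f i ≤ ∏ i ∈ s, (1 - f i) := by
  induction s using Finset.cons_induction with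
  | empty => simp
  | cons a s ha ih =>
    rw [Finset.sum_cons, Finset.prod_cons]
    have h0a : 0 ≤ f a := h0 a (Finset.mem_cons_self a s)
    have h1a : f a ≤ 1 := h1 a (Finset.mem_cons_self a s)
    have ih' := ih (fun i hi => h0 i (Finset.mem_cons_of_mem hi))
      (fun i hi => h1 i (Finset.mem_cons_of_mem hi))
    have hS : 0 ≤ ∑ i ∈ s, f i :=
      Finset.sum_nonneg fun i hi => h0 i (Finset.mem_cons_of_mem hi)
    nlinarith [mul_le_mul_of_nonneg_left ih' (by linarith : (0:ℝ) ≤ 1 - f a)]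

/-- Proposition 1, product form: for `0 ≤ α < 1`, for every `τ > 0` and `δ > 0`
there is `n₀` such that `|P_{N,α}(t) − 1| < δ` for all `N > n₀` and all `|t| ≤ τ`. -/
theorem stmt_3 (α : ℝ) (hα0 : 0 ≤ α) (hα1 : α < 1) (τ δ : ℝ) (hτ : 0 < τ) (hδ : 0 < δ) :
    ∃ n₀ : ℕ, ∀ N : ℕ, N > n₀ → ∀ t : ℝ, |t| ≤ τ → |relaxProd α N t - 1| < δ := by
  have h1α : 0 < 1 - α := by linarith
  set K : ℝ := (τ ^ 2 / δ) ^ (1 / (1 - α)) with hK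
  have hKpos : 0 < K := Real.rpow_pos_of_pos (by positivity) _
  refine ⟨2 * (⌈K⌉₊ + 1), fun N hN t ht => ?_⟩
  set M := N / 2 with hM
  -- M is large
  have hMge : ⌈K⌉₊ + 1 ≤ M := by
    have : 2 * (⌈K⌉₊ + 1) + 1 ≤ N := hN
    omega
  have hM1 : 1 ≤ M := by omega
  have hMK : K < (M : ℝ) := by
    calc K ≤ (⌈K⌉₊ : ℝ) := Nat.le_ceil K
    _ < (M : ℝ) := by exact_mod_cast Nat.lt_of_lt_of_le (Nat.lt_succ_self _) hMge
  have hMpos : (0:ℝ) < M := by positivity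
  -- basic facts about the terms
  have hterm_pos : ∀ j ∈ Finset.Icc 1 M, (0:ℝ) < (j : ℝ) ^ (-α) := by
    intro j hj
    have : (0:ℝ) < j := by
      exact_mod_cast Nat.lt_of_lt_of_le Nat.zero_lt_one (Finset.mem_Icc.1 hj).1
    positivity
  have hterm_le1 : ∀ j ∈ Finset.Icc 1 M, (j : ℝ) ^ (-α) ≤ 1 := by
    intro j hj
    have h1j : (1:ℝ) ≤ j := by exact_mod_cast (Finset.mem_Icc.1 hj).1
    exact Real.rpow_le_one_of_one_le_of_nonpos h1j (by linarith)
  set S : ℝ := ∑ j ∈ Finset.Icc 1 M, (j : ℝ) ^ (-α) with hS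
  have hne : (Finset.Icc 1 M).Nonempty := ⟨1, by simp [hM1]⟩
  have hSpos : 0 < S := Finset.sum_pos hterm_pos hne
  -- lower bound on S
  have hSlb : (M : ℝ) ^ (1 - α) ≤ S := by
    have : ∑ j ∈ Finset.Icc 1 M, (M : ℝ) ^ (-α) ≤ S :=
      Finset.sum_le_sum fun j hj => by
        have hj1 : (0:ℝ) < j := by
          exact_mod_cast Nat.lt_of_lt_of_le Nat.zero_lt_one (Finset.mem_Icc.1 hj).1
        have hjM : (j:ℝ) ≤ M := by exact_mod_cast (Finset.mem_Icc.1 hj).2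
        exact Real.rpow_le_rpow_of_nonpos hj1 hjM (by linarith)
    have hcard : (Finset.Icc 1 M).card = M := by simp
    rw [Finset.sum_const, hcard, nsmul_eq_mul] at this
    calc (M : ℝ) ^ (1 - α) = (M : ℝ) ^ ((1:ℝ) + (-α)) := by ring_nf
    _ = (M : ℝ) ^ (1:ℝ) * (M : ℝ) ^ (-α) := Real.rpow_add hMpos 1 (-α)
    _ = (M : ℝ) * (M : ℝ) ^ (-α) := by rw [Real.rpow_one]
    _ ≤ S := this
  -- the sum of squares of arguments is ≤ t²/S
  have hc : 2 * kacNorm α N * t = t / S := by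
    rw [kacNorm]
    have : (N / 2) = M := hM.symm
    rw [this, ← hS]
    field_simp
  -- lower bound for the product via Weierstrass
  have hPle1 : relaxProd α N t ≤ 1 := by
    rw [relaxProd]
    apply Finset.prod_le_one
    · intro j _; positivity
    · intro j _; exact Real.cos_sq_le_one _
  have hPlb : 1 - τ ^ 2 / S ≤ relaxProd α N t := by
    have key : relaxProd α N t = ∏ j ∈ Finset.Icc 1 M,
        (1 - Real.sin (2 * kacNorm α N * t * (j : ℝ) ^ (-α)) ^ 2) := by
      rw [relaxProd]
      exact Finset.prod_congr rfl fun j _ => by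
        rw [Real.cos_sq']
    rw [key]
    have hw := weier_aux (Finset.Icc 1 M)
      (fun j => Real.sin (2 * kacNorm α N * t * (j : ℝ) ^ (-α)) ^ 2)
      (fun j _ => sq_nonneg _)
      (fun j _ => Real.sin_sq_le_one _)
    refine le_trans ?_ hw
    have hsum : ∑ j ∈ Finset.Icc 1 M, Real.sin (2 * kacNorm α N * t * (j : ℝ) ^ (-α)) ^ 2
        ≤ τ ^ 2 / S := by
      have step1 : ∀ j ∈ Finset.Icc 1 M,
          Real.sin (2 * kacNorm α N * t * (j : ℝ) ^ (-α)) ^ 2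
          ≤ (τ ^ 2 / S ^ 2) * (j : ℝ) ^ (-α) := by
        intro j hj
        have h1 : Real.sin (2 * kacNorm α N * t * (j : ℝ) ^ (-α)) ^ 2
            ≤ (2 * kacNorm α N * t * (j : ℝ) ^ (-α)) ^ 2 := Real.sin_sq_le_sq
        have h2 : (2 * kacNorm α N * t * (j : ℝ) ^ (-α)) ^ 2
            = (t ^ 2 / S ^ 2) * ((j : ℝ) ^ (-α)) ^ 2 := by
          rw [hc]; field_simp
        have ht2 : t ^ 2 ≤ τ ^ 2 := by
          have := abs_le.1 ht
          nlinarith [abs_nonneg t, sq_abs t]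
        have hjp := hterm_pos j hj
        have hjl := hterm_le1 j hj
        have h3 : ((j : ℝ) ^ (-α)) ^ 2 ≤ (j : ℝ) ^ (-α) := by nlinarith
        calc Real.sin (2 * kacNorm α N * t * (j : ℝ) ^ (-α)) ^ 2
            ≤ (t ^ 2 / S ^ 2) * ((j : ℝ) ^ (-α)) ^ 2 := by rw [← h2]; exact h1
          _ ≤ (τ ^ 2 / S ^ 2) * (j : ℝ) ^ (-α) := by
              have hA : t ^ 2 / S ^ 2 ≤ τ ^ 2 / S ^ 2 := by gcongr
              exact mul_le_mul hA h3 (sq_nonneg _) (by positivity)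
      calc ∑ j ∈ Finset.Icc 1 M, Real.sin (2 * kacNorm α N * t * (j : ℝ) ^ (-α)) ^ 2
          ≤ ∑ j ∈ Finset.Icc 1 M, (τ ^ 2 / S ^ 2) * (j : ℝ) ^ (-α) :=
            Finset.sum_le_sum step1
        _ = (τ ^ 2 / S ^ 2) * S := by rw [← Finset.mul_sum]
        _ = τ ^ 2 / S := by field_simp
    linarith
  have hfinal : τ ^ 2 / S < δ := by
    have hKrpow : K ^ (1 - α) = τ ^ 2 / δ := by
      rw [hK, ← Real.rpow_mul (by positivity), one_div,
        inv_mul_cancel₀ (ne_of_gt h1α), Real.rpow_one]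
    have hMrpow : τ ^ 2 / δ < (M : ℝ) ^ (1 - α) := by
      rw [← hKrpow]
      exact Real.rpow_lt_rpow hKpos.le hMK h1α
    have hlt : τ ^ 2 / δ < S := lt_of_lt_of_le hMrpow hSlb
    rw [div_lt_iff₀ hSpos]
    calc τ ^ 2 = (τ ^ 2 / δ) * δ := by field_simp
    _ < S * δ := mul_lt_mul_of_pos_right hlt hδ
    _ = δ * S := mul_comm _ _
  rw [abs_sub_lt_iff]
  constructor
  · linarith
  · linarith
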